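/- Let d ≥ 2 and suppose |S| is odd. Then Alice wins if and only if there exists a point x ∈ S such that every affine hyperplane through x is good; moreover, any such x is a winning point for Alice. -/
import Mathlib

open scoped RealInnerProductSpace
open scoped Classical

/-- `claims S a b` is the number of voters in `S` strictly closer to `a` than to `b`.
Thus `V_A(a,b) = claims S a b` and `V_B(a,b) = claims S b a`. -/
noncomputable def claims {d : ℕ} (S : Finset (EuclideanSpace ℝ (Fin d)))
    (a b : EuclideanSpace ℝ (Fin d)) : ℕ :=
  (S.filter fun x => dist a x < dist b x).card

/-- `a` is a winning point for Alice: `V_A(a,b) ≥ V_B(a,b)` for every `b`. -/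
def IsWinningPoint {d : ℕ} (S : Finset (EuclideanSpace ℝ (Fin d)))
    (a : EuclideanSpace ℝ (Fin d)) : Prop :=
  ∀ b : EuclideanSpace ℝ (Fin d), claims S b a ≤ claims S a b

lemma closer_iff {d : ℕ} (a b y : EuclideanSpace ℝ (Fin d)) :
    dist b y < dist a y ↔ ‖b‖^2 - ‖a‖^2 < 2 * ⟪y, b - a⟫ := by
  rw [dist_eq_norm, dist_eq_norm]
  rw [← Real.sqrt_sq (norm_nonneg (b - y)), ← Real.sqrt_sq (norm_nonneg (a - y))]
  rw [Real.sqrt_lt_sqrt_iff (by positivity)]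
  rw [norm_sub_sq_real, norm_sub_sq_real, inner_sub_right]
  rw [real_inner_comm y b, real_inner_comm y a]
  constructor <;> intro h <;> nlinarith

lemma ev_pos {f : ℝ → ℝ} (hf : Continuous f) (h0 : 0 < f 0) :
    ∀ᶠ ε in nhdsWithin (0:ℝ) (Set.Ioi 0), 0 < f ε :=
  eventually_nhdsWithin_of_eventually_nhds ((hf.tendsto 0).eventually_const_lt h0)

lemma exists_generic {d : ℕ} (V : Submodule ℝ (EuclideanSpace ℝ (Fin d)))
    (F : Finset (EuclideanSpace ℝ (Fin d)))
    (hF : ∀ v ∈ F, v ∈ V ∧ v ≠ 0) :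
    ∃ u ∈ V, ∀ v ∈ F, ⟪v, u⟫ ≠ 0 := by
  classical
  induction F using Finset.induction with
  | empty => exact ⟨0, V.zero_mem, by simp⟩
  | @insert v F hv ih =>
    obtain ⟨u, huV, hu⟩ := ih (fun w hw => hF w (Finset.mem_insert_of_mem hw))
    obtain ⟨hvV, hv0⟩ := hF v (Finset.mem_insert_self v F)
    set bad : Finset ℝ := insert (-⟪v,u⟫/‖v‖^2) (F.image (fun w => -⟪w,u⟫/⟪w,v⟫)) with hbad
    obtain ⟨t, ht⟩ := (Set.Finite.infinite_compl (bad : Finset ℝ).finite_toSet).nonempty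
    refine ⟨u + t • v, V.add_mem huV (V.smul_mem t hvV), ?_⟩
    have hne : ∀ s ∈ bad, t ≠ s := by
      intro s hs h; exact ht (by simpa [h] using hs)
    intro w hw
    rw [inner_add_right, real_inner_smul_right]
    rcases Finset.mem_insert.mp hw with rfl | hwF
    · have hvv : ⟪w, w⟫ = (‖w‖:ℝ)^2 := real_inner_self_eq_norm_sq w
      have hn : (‖w‖:ℝ)^2 ≠ 0 := pow_ne_zero 2 (norm_ne_zero_iff.mpr hv0)
      rw [hvv]
      intro h
      refine hne _ (Finset.mem_insert_self _ _) ((eq_div_iff hn).mpr ?_)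
      linarith
    · by_cases hwv : ⟪w, v⟫ = 0
      · rw [hwv, mul_zero, add_zero]; exact hu w hwF
      · intro h
        refine hne _ (Finset.mem_insert_of_mem (Finset.mem_image_of_mem _ hwF))
          ((eq_div_iff hwv).mpr ?_)
        linarith

lemma perturb {d : ℕ} (S : Finset (EuclideanSpace ℝ (Fin d))) (a c u : EuclideanSpace ℝ (Fin d))
    (hc : c ≠ 0) (hcu : ⟪u, c⟫ = 0)
    (hu : ∀ y ∈ S, ⟪y, c⟫ = ⟪a, c⟫ → y ≠ a → ⟪y - a, u⟫ ≠ 0)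
    (hw : IsWinningPoint S a) :
    (S.filter fun y => ⟪a,c⟫ < ⟪y,c⟫).card
      + (S.filter fun y => ⟪y,c⟫ = ⟪a,c⟫ ∧ 0 < ⟪y - a, u⟫).card
    ≤ (S.filter fun y => ⟪y,c⟫ < ⟪a,c⟫).card
      + (S.filter fun y => ⟪y,c⟫ = ⟪a,c⟫ ∧ ⟪y - a, u⟫ < 0).card
      + (if a ∈ S then 1 else 0) := by
  set lam := ⟪a,c⟫ with hlam
  have hc2 : (0:ℝ) < ‖c‖^2 := by
    have := norm_pos_iff.mpr hc; positivity
  obtain ⟨C, hC0, hC⟩ : ∃ C : ℝ, 0 < C ∧ ∀ y ∈ S, ⟪y,c⟫ = lam → 0 < ⟪y - a, u⟫ →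
      1 + ‖c‖^2 ≤ C * ⟪y - a, u⟫ := by
    set f : EuclideanSpace ℝ (Fin d) → ℝ := fun y => (1+‖c‖^2)/⟪y - a, u⟫ with hf
    set F := S.filter (fun y => ⟪y,c⟫ = lam ∧ 0 < ⟪y - a, u⟫) with hF
    rcases F.eq_empty_or_nonempty with he | hne
    · refine ⟨1, one_pos, fun y hy h1 h2 => absurd ?_ (by simp [he] : y ∉ F)⟩
      exact Finset.mem_filter.mpr ⟨hy, h1, h2⟩
    · refine ⟨(F.image f).max' (hne.image f), ?_, ?_⟩
      · obtain ⟨y0, hy0⟩ := hne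
        have hy0' := (Finset.mem_filter.mp hy0).2
        exact lt_of_lt_of_le (div_pos (by positivity) hy0'.2)
          (Finset.le_max' (F.image f) (f y0) (Finset.mem_image_of_mem f hy0))
      · intro y hy h1 h2
        have hle : f y ≤ (F.image f).max' (hne.image f) :=
          Finset.le_max' _ _ (Finset.mem_image_of_mem f (Finset.mem_filter.mpr ⟨hy, h1, h2⟩))
        calc 1 + ‖c‖^2 = f y * ⟪y - a, u⟫ := (div_mul_cancel₀ _ (ne_of_gt h2)).symm
          _ ≤ _ := mul_le_mul_of_nonneg_right hle (le_of_lt h2)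
  have e1 : ∀ ε : ℝ, ‖(C*ε^2) • u + ε • c‖^2 = (C*ε^2)^2*‖u‖^2 + ε^2*‖c‖^2 := by
    intro ε
    rw [norm_add_sq_real, real_inner_smul_left, real_inner_smul_right, hcu]
    rw [norm_smul, norm_smul, mul_pow, mul_pow, Real.norm_eq_abs, Real.norm_eq_abs,
      sq_abs, sq_abs]
    ring
  have hchar : ∀ (ε : ℝ) (y : EuclideanSpace ℝ (Fin d)),
      (dist (a + ((C*ε^2) • u + ε • c)) y < dist a y ↔
        C^2*ε^4*‖u‖^2 + ε^2*‖c‖^2 < 2*(C*ε^2*(⟪y,u⟫ - ⟪a,u⟫) + ε*(⟪y,c⟫ - lam))) := by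
    intro ε y
    rw [closer_iff, add_sub_cancel_left, norm_add_sq_real, e1]
    rw [inner_add_right, inner_add_right, real_inner_smul_right, real_inner_smul_right,
      real_inner_smul_right, real_inner_smul_right]
    constructor <;> intro h <;> nlinarith
  have hchar2 : ∀ (ε : ℝ) (y : EuclideanSpace ℝ (Fin d)),
      (dist a y < dist (a + ((C*ε^2) • u + ε • c)) y ↔
        2*(C*ε^2*(⟪y,u⟫ - ⟪a,u⟫) + ε*(⟪y,c⟫ - lam)) < C^2*ε^4*‖u‖^2 + ε^2*‖c‖^2) := by
    intro ε y
    rw [closer_iff, sub_add_cancel_left, inner_neg_right, norm_add_sq_real, e1]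
    rw [inner_add_right, inner_add_right, real_inner_smul_right, real_inner_smul_right,
      real_inner_smul_right, real_inner_smul_right]
    constructor <;> intro h <;> nlinarith
  have hinner : ∀ y : EuclideanSpace ℝ (Fin d), ⟪y - a, u⟫ = ⟪y,u⟫ - ⟪a,u⟫ :=
    fun y => inner_sub_left y a u
  have main : ∀ y ∈ S, ∀ᶠ ε in nhdsWithin (0:ℝ) (Set.Ioi 0),
      ((dist (a + ((C*ε^2) • u + ε • c)) y < dist a y ↔
          (lam < ⟪y,c⟫ ∨ (⟪y,c⟫ = lam ∧ 0 < ⟪y - a, u⟫)))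
        ∧ (dist a y < dist (a + ((C*ε^2) • u + ε • c)) y ↔
          (⟪y,c⟫ < lam ∨ (⟪y,c⟫ = lam ∧ ⟪y - a, u⟫ ≤ 0)))) := by
    intro y hy
    have hpos : ∀ᶠ ε in nhdsWithin (0:ℝ) (Set.Ioi 0), (0:ℝ) < ε := eventually_mem_nhdsWithin
    rcases lt_trichotomy ⟪y,c⟫ lam with hyc | hyc | hyc
    · have hev := ev_pos (f := fun ε => 2*(lam - ⟪y,c⟫) - (2*C*(⟪y,u⟫ - ⟪a,u⟫))*ε)
        (by fun_prop) (by simp only [mul_zero, sub_zero]; linarith)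
      filter_upwards [hpos, hev] with ε hε hf
      have hD2 : dist a y < dist (a + ((C*ε^2) • u + ε • c)) y := by
        rw [hchar2]
        nlinarith [mul_pos hε hf, mul_pos hε hε, sq_nonneg (C*ε^2), sq_nonneg ‖u‖]
      have hD : ¬ dist (a + ((C*ε^2) • u + ε • c)) y < dist a y := lt_asymm hD2
      refine ⟨⟨fun h => absurd h hD, ?_⟩, ⟨fun _ => Or.inl hyc, fun _ => hD2⟩⟩
      rintro (h | ⟨h, -⟩)
      · exact absurd h (lt_asymm hyc)
      · exact absurd h (ne_of_lt hyc)
    · rcases le_or_gt ⟪y - a, u⟫ 0 with hw0 | hw0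
      · filter_upwards [hpos] with ε hε
        have hD2 : dist a y < dist (a + ((C*ε^2) • u + ε • c)) y := by
          rw [hchar2, ← hinner, hyc, sub_self, mul_zero, add_zero]
          have h1 : C*ε^2*⟪y - a, u⟫ ≤ 0 :=
            mul_nonpos_of_nonneg_of_nonpos (by positivity) hw0
          nlinarith [mul_pos hε hε, sq_nonneg (C*ε^2), sq_nonneg ‖u‖]
        refine ⟨⟨fun h => absurd h (lt_asymm hD2), ?_⟩,
          ⟨fun _ => Or.inr ⟨hyc, hw0⟩, fun _ => hD2⟩⟩
        rintro (h | ⟨-, h⟩)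
        · exact absurd hyc (ne_of_gt h)
        · exact absurd h (not_lt.mpr hw0)
      · have hCy := hC y hy hyc hw0
        have hev := ev_pos (f := fun ε => 2*(C*⟪y - a, u⟫) - ‖c‖^2 - (C^2*‖u‖^2*ε)*ε)
          (by fun_prop) (by simp only [mul_zero, sub_zero]; linarith)
        filter_upwards [hpos, hev] with ε hε hf
        have hD : dist (a + ((C*ε^2) • u + ε • c)) y < dist a y := by
          rw [hchar, ← hinner, hyc, sub_self, mul_zero, add_zero]
          nlinarith [mul_pos (mul_pos hε hε) hf]
        refine ⟨⟨fun _ => Or.inr ⟨hyc, hw0⟩, fun _ => hD⟩,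
          ⟨fun h => absurd h (lt_asymm hD), ?_⟩⟩
        rintro (h | ⟨-, h⟩)
        · exact absurd hyc (ne_of_lt h)
        · exact absurd hw0 (not_lt.mpr h)
    · have hev := ev_pos (f := fun ε => 2*(⟪y,c⟫ - lam) + (2*C*(⟪y,u⟫ - ⟪a,u⟫))*ε
          - (C^2*‖u‖^2*ε^2)*ε - ‖c‖^2*ε)
        (by fun_prop) (by simp only [mul_zero, sub_zero, add_zero]; linarith)
      filter_upwards [hpos, hev] with ε hε hf
      have hD : dist (a + ((C*ε^2) • u + ε • c)) y < dist a y := by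
        rw [hchar]
        nlinarith [mul_pos hε hf]
      refine ⟨⟨fun _ => Or.inl hyc, fun _ => hD⟩, ⟨fun h => absurd h (lt_asymm hD), ?_⟩⟩
      rintro (h | ⟨h, -⟩)
      · exact absurd h (lt_asymm hyc)
      · exact absurd h (ne_of_gt hyc)
  obtain ⟨ε, hε⟩ := ((Filter.eventually_all_finset S).mpr main).exists
  have hwb := hw (a + ((C*ε^2) • u + ε • c))
  unfold claims at hwb
  have hB : S.filter (fun y => dist (a + ((C*ε^2) • u + ε • c)) y < dist a y)
      = S.filter (fun y => lam < ⟪y,c⟫ ∨ (⟪y,c⟫ = lam ∧ 0 < ⟪y - a, u⟫)) :=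
    Finset.filter_congr (fun y hy => (hε y hy).1)
  have hA : S.filter (fun y => dist a y < dist (a + ((C*ε^2) • u + ε • c)) y)
      = S.filter (fun y => ⟪y,c⟫ < lam ∨ (⟪y,c⟫ = lam ∧ ⟪y - a, u⟫ ≤ 0)) :=
    Finset.filter_congr (fun y hy => (hε y hy).2)
  rw [hB, hA] at hwb
  have cardB : (S.filter (fun y => lam < ⟪y,c⟫ ∨ (⟪y,c⟫ = lam ∧ 0 < ⟪y - a, u⟫))).card
      = (S.filter fun y => lam < ⟪y,c⟫).card
        + (S.filter fun y => ⟪y,c⟫ = lam ∧ 0 < ⟪y - a, u⟫).card := by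
    rw [Finset.filter_or]
    apply Finset.card_union_of_disjoint
    rw [Finset.disjoint_left]
    intro y h1 h2
    rw [Finset.mem_filter] at h1 h2
    exact absurd h2.2.1 (ne_of_gt h1.2)
  have cardA : (S.filter (fun y => ⟪y,c⟫ < lam ∨ (⟪y,c⟫ = lam ∧ ⟪y - a, u⟫ ≤ 0))).card
      ≤ (S.filter fun y => ⟪y,c⟫ < lam).card
        + (S.filter fun y => ⟪y,c⟫ = lam ∧ ⟪y - a, u⟫ < 0).card
        + (if a ∈ S then 1 else 0) := by
    have hsub : S.filter (fun y => ⟪y,c⟫ < lam ∨ (⟪y,c⟫ = lam ∧ ⟪y - a, u⟫ ≤ 0))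
        ⊆ (S.filter fun y => ⟪y,c⟫ < lam)
          ∪ ((S.filter fun y => ⟪y,c⟫ = lam ∧ ⟪y - a, u⟫ < 0)
              ∪ (if a ∈ S then {a} else ∅)) := by
      intro y hy
      rw [Finset.mem_filter] at hy
      obtain ⟨hyS, hcase⟩ := hy
      rcases hcase with h | ⟨h1, h2⟩
      · exact Finset.mem_union_left _ (Finset.mem_filter.mpr ⟨hyS, h⟩)
      · by_cases hya : y = a
        · subst hya
          refine Finset.mem_union_right _ (Finset.mem_union_right _ ?_)
          simp [hyS]
        · refine Finset.mem_union_right _ (Finset.mem_union_left _ ?_)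
          exact Finset.mem_filter.mpr ⟨hyS, h1, lt_of_le_of_ne h2 (hu y hyS h1 hya)⟩
    calc _ ≤ _ := Finset.card_le_card hsub
      _ ≤ _ := by
        refine le_trans (Finset.card_union_le _ _) ?_
        rw [add_assoc]
        refine Nat.add_le_add_left (le_trans (Finset.card_union_le _ _) ?_) _
        refine Nat.add_le_add_left ?_ _
        split <;> simp
  calc _ = _ := cardB.symm
    _ ≤ _ := hwb
    _ ≤ _ := cardA

lemma winning_of_good {d : ℕ} (S : Finset (EuclideanSpace ℝ (Fin d)))
    (x : EuclideanSpace ℝ (Fin d))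
    (H : ∀ (c : EuclideanSpace ℝ (Fin d)) (lam : ℝ), c ≠ 0 → ⟪x, c⟫ = lam →
      (S.filter fun y => lam < ⟪y, c⟫).card = (S.filter fun y => ⟪y, c⟫ < lam).card) :
    IsWinningPoint S x := by
  intro b
  by_cases hbx : b = x
  · subst hbx; exact le_refl _
  have hc : b - x ≠ 0 := sub_ne_zero.mpr hbx
  set lam := ⟪x, b - x⟫ with hlam
  have hkey : 2 * lam < ‖b‖^2 - ‖x‖^2 := by
    have h1 : ‖b - x‖^2 = ‖b‖^2 - 2*⟪b,x⟫ + ‖x‖^2 := norm_sub_sq_real b x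
    have h2 : (0:ℝ) < ‖b - x‖^2 := by
      have := norm_pos_iff.mpr hc; positivity
    have h3 : lam = ⟪x,b⟫ - ⟪x,x⟫ := inner_sub_right x b x
    have h4 : ⟪x,x⟫ = ‖x‖^2 := real_inner_self_eq_norm_sq x
    have h5 : ⟪x,b⟫ = ⟪b,x⟫ := real_inner_comm b x
    nlinarith
  have hBf : S.filter (fun y => dist b y < dist x y)
      = S.filter (fun y => ‖b‖^2 - ‖x‖^2 < 2 * ⟪y, b - x⟫) :=
    Finset.filter_congr (fun y _ => closer_iff x b y)
  have hAf : S.filter (fun y => dist x y < dist b y)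
      = S.filter (fun y => ‖x‖^2 - ‖b‖^2 < 2 * ⟪y, x - b⟫) :=
    Finset.filter_congr (fun y _ => closer_iff b x y)
  have hneg : ∀ y : EuclideanSpace ℝ (Fin d), ⟪y, x - b⟫ = -⟪y, b - x⟫ := by
    intro y; rw [← inner_neg_right, neg_sub]
  unfold claims
  rw [hBf, hAf]
  calc (S.filter (fun y => ‖b‖^2 - ‖x‖^2 < 2 * ⟪y, b - x⟫)).card
      ≤ (S.filter fun y => lam < ⟪y, b - x⟫).card := by
        apply Finset.card_le_card
        intro y hy
        rw [Finset.mem_filter] at hy ⊢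
        exact ⟨hy.1, by linarith [hy.2]⟩
    _ = (S.filter fun y => ⟪y, b - x⟫ < lam).card := H (b - x) lam hc rfl
    _ ≤ (S.filter (fun y => ‖x‖^2 - ‖b‖^2 < 2 * ⟪y, x - b⟫)).card := by
        apply Finset.card_le_card
        intro y hy
        rw [Finset.mem_filter] at hy ⊢
        refine ⟨hy.1, ?_⟩
        rw [hneg y]
        linarith [hy.2]

/-- for `d ≥ 2` and `|S|` odd, Alice wins iff there is `x ∈ S` such that every
affine hyperplane through `x` is good (equal numbers of points of `S` on its two open sides);
moreover any such `x` is a winning point. -/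
theorem stmt4 (d : ℕ) (hd : 2 ≤ d) (S : Finset (EuclideanSpace ℝ (Fin d)))
    (hodd : Odd S.card) :
    ((∃ a, IsWinningPoint S a) ↔
      ∃ x ∈ S, ∀ (c : EuclideanSpace ℝ (Fin d)) (lam : ℝ), c ≠ 0 → ⟪x, c⟫ = lam →
        (S.filter fun y => lam < ⟪y, c⟫).card = (S.filter fun y => ⟪y, c⟫ < lam).card) ∧
    (∀ x ∈ S,
      (∀ (c : EuclideanSpace ℝ (Fin d)) (lam : ℝ), c ≠ 0 → ⟪x, c⟫ = lam →
        (S.filter fun y => lam < ⟪y, c⟫).card = (S.filter fun y => ⟪y, c⟫ < lam).card) →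
      IsWinningPoint S x) := by
  constructor
  · constructor
    · rintro ⟨a, ha⟩
      -- Step A: a ∈ S
      have haS : a ∈ S := by
        by_contra haS
        set e : EuclideanSpace ℝ (Fin d) := EuclideanSpace.single (⟨0, by omega⟩ : Fin d) (1:ℝ)
          with he_def
        have he : e ≠ 0 := by
          intro h
          have := EuclideanSpace.norm_single (𝕜 := ℝ) (⟨0, by omega⟩ : Fin d) (1:ℝ)
          rw [← he_def, h] at this
          simp at this
        obtain ⟨c, -, hcF⟩ := exists_generic (⊤ : Submodule ℝ (EuclideanSpace ℝ (Fin d)))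
          (insert e ((S.erase a).image (fun y => y - a)))
          (by
            intro v hv
            refine ⟨Submodule.mem_top, ?_⟩
            rcases Finset.mem_insert.mp hv with rfl | hv
            · exact he
            · obtain ⟨y, hy, rfl⟩ := Finset.mem_image.mp hv
              exact sub_ne_zero.mpr (Finset.ne_of_mem_erase hy))
        have hc0 : c ≠ 0 := by
          intro h
          apply hcF e (Finset.mem_insert_self _ _)
          rw [h, inner_zero_right]
        have hplane : ∀ y ∈ S, ⟪y,c⟫ = ⟪a,c⟫ → y = a := by
          intro y hy h
          by_contra hne
          apply hcF (y - a) (Finset.mem_insert_of_mem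
            (Finset.mem_image_of_mem _ (Finset.mem_erase.mpr ⟨hne, hy⟩)))
          rw [inner_sub_left, h, sub_self]
        have hzero : ∀ (c' : EuclideanSpace ℝ (Fin d)),
            (S.filter fun y => ⟪y,c'⟫ = ⟪a,c'⟫ ∧ 0 < ⟪y - a, (0:EuclideanSpace ℝ (Fin d))⟫).card = 0
            ∧ (S.filter fun y => ⟪y,c'⟫ = ⟪a,c'⟫ ∧ ⟪y - a, (0:EuclideanSpace ℝ (Fin d))⟫ < 0).card = 0 := by
          intro c'
          constructor <;>
          · rw [Finset.card_eq_zero, Finset.filter_eq_empty_iff]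
            rintro y - ⟨-, h⟩
            rw [inner_zero_right] at h
            exact lt_irrefl 0 h
        have h1 := perturb S a c 0 hc0 (inner_zero_left c)
          (fun y hy h hne => absurd (hplane y hy h) hne) ha
        have h2 := perturb S a (-c) 0 (neg_ne_zero.mpr hc0) (inner_zero_left (-c))
          (fun y hy h hne => absurd (hplane y hy (by
            rw [inner_neg_right, inner_neg_right, neg_inj] at h; exact h)) hne) ha
        rw [(hzero c).1, (hzero c).2, if_neg haS] at h1
        rw [(hzero (-c)).1, (hzero (-c)).2, if_neg haS] at h2
        have hg1 : S.filter (fun y => ⟪a,-c⟫ < ⟪y,-c⟫) = S.filter (fun y => ⟪y,c⟫ < ⟪a,c⟫) :=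
          Finset.filter_congr (fun y _ => by rw [inner_neg_right, inner_neg_right]
                                             exact neg_lt_neg_iff)
        have hg2 : S.filter (fun y => ⟪y,-c⟫ < ⟪a,-c⟫) = S.filter (fun y => ⟪a,c⟫ < ⟪y,c⟫) :=
          Finset.filter_congr (fun y _ => by rw [inner_neg_right, inner_neg_right]
                                             exact neg_lt_neg_iff)
        rw [hg1, hg2] at h2
        have t1 := Finset.card_filter_add_card_filter_not
          (s := S) (p := fun y => ⟪a,c⟫ < ⟪y,c⟫)
        have hnegf : S.filter (fun y => ¬ ⟪a,c⟫ < ⟪y,c⟫) = S.filter (fun y => ⟪y,c⟫ < ⟪a,c⟫) := by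
          apply Finset.filter_congr
          intro y hy
          constructor
          · intro h
            rcases lt_or_eq_of_le (not_lt.mp h) with h' | h'
            · exact h'
            · exact absurd (hplane y hy h') (fun hya => haS (hya ▸ hy))
          · exact fun h => not_lt.mpr (le_of_lt h)
        rw [hnegf] at t1
        obtain ⟨k, hk⟩ := hodd
        omega
      refine ⟨a, haS, ?_⟩
      intro c lam hc0 hlam
      subst hlam
      obtain ⟨u, huV, huF⟩ := exists_generic ((ℝ ∙ c)ᗮ)
        (((S.filter (fun y => ⟪y,c⟫ = ⟪a,c⟫)).erase a).image (fun y => y - a))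
        (by
          intro v hv
          obtain ⟨y, hy, rfl⟩ := Finset.mem_image.mp hv
          have hy1 := Finset.mem_erase.mp hy
          have hy2 := Finset.mem_filter.mp hy1.2
          refine ⟨Submodule.mem_orthogonal_singleton_iff_inner_right.mpr ?_,
            sub_ne_zero.mpr hy1.1⟩
          rw [inner_sub_right, real_inner_comm y c, real_inner_comm a c, hy2.2, sub_self])
      have hcu : ⟪u, c⟫ = 0 := by
        have := Submodule.mem_orthogonal_singleton_iff_inner_right.mp huV
        rw [real_inner_comm] at this
        exact this
      have huval : ∀ y ∈ S, ⟪y,c⟫ = ⟪a,c⟫ → y ≠ a → ⟪y - a, u⟫ ≠ 0 := by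
        intro y hy h hne
        exact huF (y - a) (Finset.mem_image_of_mem _
          (Finset.mem_erase.mpr ⟨hne, Finset.mem_filter.mpr ⟨hy, h⟩⟩))
      have huvaln : ∀ y ∈ S, ⟪y,c⟫ = ⟪a,c⟫ → y ≠ a → ⟪y - a, -u⟫ ≠ 0 := by
        intro y hy h hne
        rw [inner_neg_right]
        exact neg_ne_zero.mpr (huval y hy h hne)
      have hplane_neg : ∀ y : EuclideanSpace ℝ (Fin d), (⟪y,-c⟫ = ⟪a,-c⟫) = (⟪y,c⟫ = ⟪a,c⟫) := by
        intro y
        rw [inner_neg_right, inner_neg_right]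
        simp [neg_inj]
      have huvalc : ∀ y ∈ S, ⟪y,-c⟫ = ⟪a,-c⟫ → y ≠ a → ⟪y - a, u⟫ ≠ 0 := by
        intro y hy h hne
        exact huval y hy ((hplane_neg y) ▸ h) hne
      have huvalcn : ∀ y ∈ S, ⟪y,-c⟫ = ⟪a,-c⟫ → y ≠ a → ⟪y - a, -u⟫ ≠ 0 := by
        intro y hy h hne
        rw [inner_neg_right]
        exact neg_ne_zero.mpr (huvalc y hy h hne)
      have hcun : ⟪-u, c⟫ = 0 := by rw [inner_neg_left, hcu, neg_zero]
      have hcuc : ⟪u, -c⟫ = 0 := by rw [inner_neg_right, hcu, neg_zero]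
      have hcunc : ⟪-u, -c⟫ = 0 := by rw [inner_neg_left, hcuc, neg_zero]
      have H1 := perturb S a c u hc0 hcu huval ha
      have H2 := perturb S a c (-u) hc0 hcun huvaln ha
      have H3 := perturb S a (-c) u (neg_ne_zero.mpr hc0) hcuc huvalc ha
      have H4 := perturb S a (-c) (-u) (neg_ne_zero.mpr hc0) hcunc huvalcn ha
      have fn1 : S.filter (fun y => ⟪y,c⟫ = ⟪a,c⟫ ∧ 0 < ⟪y - a, -u⟫)
          = S.filter (fun y => ⟪y,c⟫ = ⟪a,c⟫ ∧ ⟪y - a, u⟫ < 0) :=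
        Finset.filter_congr (fun y _ => by
          rw [inner_neg_right]
          simp [neg_pos])
      have fn2 : S.filter (fun y => ⟪y,c⟫ = ⟪a,c⟫ ∧ ⟪y - a, -u⟫ < 0)
          = S.filter (fun y => ⟪y,c⟫ = ⟪a,c⟫ ∧ 0 < ⟪y - a, u⟫) :=
        Finset.filter_congr (fun y _ => by
          rw [inner_neg_right]
          simp [neg_neg, neg_lt_zero])
      have fn3 : S.filter (fun y => ⟪a,-c⟫ < ⟪y,-c⟫) = S.filter (fun y => ⟪y,c⟫ < ⟪a,c⟫) :=
        Finset.filter_congr (fun y _ => by rw [inner_neg_right, inner_neg_right]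
                                           exact neg_lt_neg_iff)
      have fn4 : S.filter (fun y => ⟪y,-c⟫ < ⟪a,-c⟫) = S.filter (fun y => ⟪a,c⟫ < ⟪y,c⟫) :=
        Finset.filter_congr (fun y _ => by rw [inner_neg_right, inner_neg_right]
                                           exact neg_lt_neg_iff)
      have fn5 : S.filter (fun y => ⟪y,-c⟫ = ⟪a,-c⟫ ∧ 0 < ⟪y - a, u⟫)
          = S.filter (fun y => ⟪y,c⟫ = ⟪a,c⟫ ∧ 0 < ⟪y - a, u⟫) :=
        Finset.filter_congr (fun y _ => by rw [hplane_neg y])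
      have fn6 : S.filter (fun y => ⟪y,-c⟫ = ⟪a,-c⟫ ∧ ⟪y - a, u⟫ < 0)
          = S.filter (fun y => ⟪y,c⟫ = ⟪a,c⟫ ∧ ⟪y - a, u⟫ < 0) :=
        Finset.filter_congr (fun y _ => by rw [hplane_neg y])
      have fn7 : S.filter (fun y => ⟪y,-c⟫ = ⟪a,-c⟫ ∧ 0 < ⟪y - a, -u⟫)
          = S.filter (fun y => ⟪y,c⟫ = ⟪a,c⟫ ∧ ⟪y - a, u⟫ < 0) :=
        Finset.filter_congr (fun y _ => by
          rw [hplane_neg y, inner_neg_right]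
          simp [neg_pos])
      have fn8 : S.filter (fun y => ⟪y,-c⟫ = ⟪a,-c⟫ ∧ ⟪y - a, -u⟫ < 0)
          = S.filter (fun y => ⟪y,c⟫ = ⟪a,c⟫ ∧ 0 < ⟪y - a, u⟫) :=
        Finset.filter_congr (fun y _ => by
          rw [hplane_neg y, inner_neg_right]
          simp [neg_lt_zero])
      rw [fn1, fn2, if_pos haS] at H2
      rw [fn3, fn4, fn5, fn6, if_pos haS] at H3
      rw [fn3, fn4, fn7, fn8, if_pos haS] at H4
      rw [if_pos haS] at H1
      have t1 := Finset.card_filter_add_card_filter_not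
        (s := S) (p := fun y => ⟪a,c⟫ < ⟪y,c⟫)
      have t2 := Finset.card_filter_add_card_filter_not
        (s := S.filter (fun y => ¬ ⟪a,c⟫ < ⟪y,c⟫)) (p := fun y => ⟪y,c⟫ < ⟪a,c⟫)
      rw [Finset.filter_filter, Finset.filter_filter] at t2
      have u1 : S.filter (fun y => ¬⟪a,c⟫ < ⟪y,c⟫ ∧ ⟪y,c⟫ < ⟪a,c⟫)
          = S.filter (fun y => ⟪y,c⟫ < ⟪a,c⟫) :=
        Finset.filter_congr (fun y _ => by
          exact ⟨fun h => h.2, fun h => ⟨not_lt.mpr (le_of_lt h), h⟩⟩)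
      have u2 : S.filter (fun y => ¬⟪a,c⟫ < ⟪y,c⟫ ∧ ¬⟪y,c⟫ < ⟪a,c⟫)
          = S.filter (fun y => ⟪y,c⟫ = ⟪a,c⟫) :=
        Finset.filter_congr (fun y _ => by
          constructor
          · rintro ⟨h1, h2⟩
            exact le_antisymm (not_lt.mp h1) (not_lt.mp h2)
          · intro h
            rw [h]
            exact ⟨lt_irrefl _, lt_irrefl _⟩)
      rw [u1, u2] at t2
      -- partition of the hyperplane count
      have hsplit : S.filter (fun y => ⟪y,c⟫ = ⟪a,c⟫)
          = (S.filter (fun y => ⟪y,c⟫ = ⟪a,c⟫ ∧ 0 < ⟪y - a, u⟫)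
            ∪ (S.filter (fun y => ⟪y,c⟫ = ⟪a,c⟫ ∧ ⟪y - a, u⟫ < 0) ∪ {a})) := by
        ext y
        simp only [Finset.mem_union, Finset.mem_filter, Finset.mem_singleton]
        constructor
        · rintro ⟨hyS, heq⟩
          rcases lt_trichotomy ⟪y - a, u⟫ 0 with h|h|h
          · exact Or.inr (Or.inl ⟨hyS, heq, h⟩)
          · right; right; by_contra hne; exact huval y hyS heq hne h
          · exact Or.inl ⟨hyS, heq, h⟩
        · rintro (⟨h1,h2,-⟩|⟨h1,h2,-⟩|rfl)
          · exact ⟨h1,h2⟩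
          · exact ⟨h1,h2⟩
          · exact ⟨haS, rfl⟩
      have hza : ⟪a - a, u⟫ = (0:ℝ) := by rw [sub_self, inner_zero_left]
      have hd1 : Disjoint (S.filter (fun y => ⟪y,c⟫ = ⟪a,c⟫ ∧ ⟪y - a, u⟫ < 0))
          ({a} : Finset (EuclideanSpace ℝ (Fin d))) := by
        rw [Finset.disjoint_left]
        intro y h1 h2
        rw [Finset.mem_filter] at h1
        rw [Finset.mem_singleton] at h2
        subst h2
        rw [hza] at h1
        exact lt_irrefl 0 h1.2.2
      have hd2 : Disjoint (S.filter (fun y => ⟪y,c⟫ = ⟪a,c⟫ ∧ 0 < ⟪y - a, u⟫))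
          (S.filter (fun y => ⟪y,c⟫ = ⟪a,c⟫ ∧ ⟪y - a, u⟫ < 0) ∪ {a}) := by
        rw [Finset.disjoint_left]
        intro y h1 h2
        rw [Finset.mem_filter] at h1
        rcases Finset.mem_union.mp h2 with h2 | h2
        · rw [Finset.mem_filter] at h2
          exact lt_asymm h1.2.2 h2.2.2
        · rw [Finset.mem_singleton] at h2
          subst h2
          rw [hza] at h1
          exact lt_irrefl 0 h1.2.2
      have hEcard : (S.filter (fun y => ⟪y,c⟫ = ⟪a,c⟫)).card
          = (S.filter (fun y => ⟪y,c⟫ = ⟪a,c⟫ ∧ 0 < ⟪y - a, u⟫)).card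
            + ((S.filter (fun y => ⟪y,c⟫ = ⟪a,c⟫ ∧ ⟪y - a, u⟫ < 0)).card + 1) := by
        rw [hsplit, Finset.card_union_of_disjoint hd2, Finset.card_union_of_disjoint hd1,
          Finset.card_singleton]
      obtain ⟨k, hk⟩ := hodd
      omega
    · rintro ⟨x, hxS, hx⟩
      exact ⟨x, winning_of_good S x hx⟩
  · intro x _ hx
    exact winning_of_good S x hx
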